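/- Assume additionally that a + b ≥ 1. Let û₂ > k satisfy: for all x ≥ û₂, (c − b·k)/(1 − a) < x + ln((x − k)/x²), and set ŵ₂ := (c − b·û₂)/(1 − a). If (x,y) ∈ Ê₂ = {(x,y) : k ≤ x ≤ û₂, y < ŵ₂}, then f(x,y) ∈ D̂₂ = {(x,y) : k ≤ x ≤ û₂, y ≤ v̂}; in other words, there is no direct passage from Ê₂ to the region Ĉ₂ = {(x,y) : x > û₂, y ≤ v̂} in one step. -/
import Mathlib


/-- No direct return from `Ê₂` to `Ĉ₂`: assuming `a + b ≥ 1`, if `(x,y) ∈ Ê₂`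
then `f(x,y) ∈ D̂₂`. -/
theorem chialvo_no_E2_to_C2
    (a b c k : ℝ)
    (ha : a ∈ Set.Ioo (0:ℝ) 1) (hb : b ∈ Set.Ioo (0:ℝ) 1)
    (hc : c ∈ Set.Ioo (0:ℝ) 1) (hk : 0 < k)
    (hab : a + b ≥ 1)
    (f : ℝ × ℝ → ℝ × ℝ)
    (hf : ∀ p : ℝ × ℝ,
      f p = (p.1 ^ 2 * Real.exp (p.2 - p.1) + k, a * p.2 - b * p.1 + c))
    (v : ℝ) (hv : v = (c - b * k) / (1 - a))
    (u2 : ℝ) (hu2k : u2 > k)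
    (hu2 : ∀ x ≥ u2, (c - b * k) / (1 - a) < x + Real.log ((x - k) / x ^ 2))
    (w2 : ℝ) (hw2 : w2 = (c - b * u2) / (1 - a))
    (D2 E2 : Set (ℝ × ℝ))
    (hD2 : D2 = {p : ℝ × ℝ | k ≤ p.1 ∧ p.1 ≤ u2 ∧ p.2 ≤ v})
    (hE2 : E2 = {p : ℝ × ℝ | k ≤ p.1 ∧ p.1 ≤ u2 ∧ p.2 < w2}) :
    ∀ p ∈ E2, f p ∈ D2 := by
  intro p hp
  rw [hE2] at hp
  obtain ⟨hkx, hxu, hyw⟩ := hp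
  rw [hD2, hf]
  set x := p.1 with hxdef
  set y := p.2 with hydef
  have ha0 := ha.1
  have ha1 : 0 < 1 - a := by linarith [ha.2]
  have hb0 := hb.1
  have hx0 : 0 < x := lt_of_lt_of_le hk hkx
  have hu20 : 0 < u2 := lt_trans hk hu2k
  have huk : 0 < u2 - k := by linarith
  -- basic log facts
  have hlogu : Real.log ((u2 - k) / u2 ^ 2) = Real.log (u2 - k) - 2 * Real.log u2 := by
    rw [Real.log_div huk.ne' (pow_ne_zero 2 hu20.ne'), Real.log_pow]
    push_cast; ring
  have hlogx : Real.log ((u2 - k) / x ^ 2) = Real.log (u2 - k) - 2 * Real.log x := by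
    rw [Real.log_div huk.ne' (pow_ne_zero 2 hx0.ne'), Real.log_pow]
    push_cast; ring
  have hlogmono : Real.log x ≤ Real.log u2 := Real.log_le_log hx0 (le_trans hxu le_rfl)
  have h1 := hu2 u2 le_rfl
  rw [hlogu] at h1
  -- v' - w' ≥ u2 - k
  have h3 : u2 - k ≤ (c - b * k) / (1 - a) - (c - b * u2) / (1 - a) := by
    have heq : (c - b * k) / (1 - a) - (c - b * u2) / (1 - a) = b * (u2 - k) / (1 - a) := by
      field_simp; ring
    rw [heq, le_div_iff₀ ha1]
    nlinarith
  have hyw' : y < (c - b * u2) / (1 - a) := by rw [hw2] at hyw; exact hyw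
  -- second coordinate bound
  have hkey : y - x < Real.log (u2 - k) - 2 * Real.log x := by linarith
  have hexp : Real.exp (y - x) < (u2 - k) / x ^ 2 := by
    have h4 : Real.exp (y - x) < Real.exp (Real.log ((u2 - k) / x ^ 2)) := by
      apply Real.exp_lt_exp.mpr
      rw [hlogx]; exact hkey
    rwa [Real.exp_log (by positivity)] at h4
  have hmid : x ^ 2 * Real.exp (y - x) < u2 - k := by
    rw [lt_div_iff₀ (by positivity : (0:ℝ) < x ^ 2)] at hexp
    nlinarith
  simp only [Set.mem_setOf_eq]
  refine ⟨by nlinarith [Real.exp_pos (y - x), sq_nonneg x], by nlinarith, ?_⟩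
  -- third coordinate
  rw [hv, le_div_iff₀ ha1]
  have h5 : y * (1 - a) < c - b * u2 := (lt_div_iff₀ ha1).mp hyw'
  nlinarith [mul_lt_mul_of_pos_left h5 ha0, mul_nonneg hb0.le (sub_nonneg.mpr hkx),
    mul_pos hb0 huk, mul_nonneg (mul_nonneg hb0.le ha1.le) (sub_nonneg.mpr hkx)]
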